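/- The unique solution of the linear ODE φ'(U) = -1 + (4/k²)·φ(U)/(U(1-U)) on (0,1) that remains bounded as U → 1⁻, in the case k = 2, is φ(U) = U(1 - U + ln U)/(U - 1). -/

import Mathlib

open Filter Topology

/-- For `k = 2` (so `4/k² = 1`), any solution `φ` of
`φ' = -1 + φ/(U(1-U))` on `(0,1)` that remains bounded as `U → 1⁻`
equals `U(1 - U + ln U)/(U - 1)` on `(0,1)`. -/
theorem stmt_10 (φ : ℝ → ℝ)
    (hode : ∀ U ∈ Set.Ioo (0 : ℝ) 1,
      HasDerivAt φ (-1 + φ U / (U * (1 - U))) U)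
    (hbdd : ∃ C : ℝ, ∀ᶠ U in 𝓝[<] (1 : ℝ), |φ U| ≤ C) :
    ∀ U ∈ Set.Ioo (0 : ℝ) 1,
      φ U = U * (1 - U + Real.log U) / (U - 1) := by
  set p : ℝ → ℝ := fun U => U * (1 - U + Real.log U) / (U - 1) with hp
  set g : ℝ → ℝ := fun U => (φ U - p U) * ((1 - U) / U) with hg
  -- g has derivative 0 on (0,1)
  have hgd : ∀ U ∈ Set.Ioo (0:ℝ) 1, HasDerivAt g 0 U := by
    intro U hU
    obtain ⟨hU0, hU1⟩ := hU
    have hUne : U ≠ 0 := ne_of_gt hU0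
    have hU1ne : U - 1 ≠ 0 := by intro h; nlinarith
    have h1U : (1:ℝ) - U ≠ 0 := by intro h; nlinarith
    -- p satisfies the same ODE
    have hnum : HasDerivAt (fun U:ℝ => U * (1 - U + Real.log U))
        (1 * (1 - U + Real.log U) + U * (-1 + U⁻¹)) U := by
      exact (hasDerivAt_id U).mul
        ((((hasDerivAt_id U).const_sub 1).add (Real.hasDerivAt_log hUne)))
    have hden : HasDerivAt (fun U:ℝ => U - 1) 1 U := (hasDerivAt_id U).sub_const 1
    have hpd : HasDerivAt p (-1 + p U / (U * (1 - U))) U := by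
      have := hnum.div hden hU1ne
      refine this.congr_deriv (Eq.symm ?_)
      simp only [hp]
      field_simp
      ring
    have hdd : HasDerivAt (fun U => φ U - p U) ((φ U - p U) / (U * (1 - U))) U := by
      have := (hode U ⟨hU0, hU1⟩).sub hpd
      refine this.congr_deriv (Eq.symm ?_)
      field_simp
      ring
    have hq : HasDerivAt (fun U:ℝ => (1 - U) / U) ((-1 * U - (1 - U) * 1) / U ^ 2) U :=
      ((hasDerivAt_id U).const_sub 1).div (hasDerivAt_id U) hUne
    have := hdd.mul hq
    refine this.congr_deriv (Eq.symm ?_)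
    field_simp
    ring
  -- g is constant on (0,1)
  have key : ∀ a b : ℝ, a ∈ Set.Ioo (0:ℝ) 1 → b ∈ Set.Ioo (0:ℝ) 1 → a ≤ b →
      g b = g a := by
    intro a b ha hb hab
    have hsub : Set.Icc a b ⊆ Set.Ioo 0 1 := fun x hx =>
      ⟨lt_of_lt_of_le ha.1 hx.1, lt_of_le_of_lt hx.2 hb.2⟩
    exact constant_of_has_deriv_right_zero
      (fun x hx => (hgd x (hsub hx)).continuousAt.continuousWithinAt)
      (fun x hx => ((hgd x (hsub ⟨hx.1, le_of_lt hx.2⟩)).hasDerivWithinAt))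
      b ⟨hab, le_refl b⟩
  have hgc : ∀ U ∈ Set.Ioo (0:ℝ) 1, g U = g (1/2) := by
    intro U hU
    have h12 : (1/2 : ℝ) ∈ Set.Ioo (0:ℝ) 1 := by norm_num
    rcases le_total U (1/2) with h | h
    · exact (key U (1/2) hU h12 h).symm
    · exact key (1/2) U h12 hU h
  -- (0,1) is eventually in 𝓝[<] 1
  have hmem : Set.Ioo (0:ℝ) 1 ∈ 𝓝[<] (1:ℝ) :=
    Ioo_mem_nhdsLT_of_mem ⟨one_pos, le_refl 1⟩
  -- g tends to 0 as U → 1⁻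
  obtain ⟨C, hC⟩ := hbdd
  have hterm2 : Tendsto (fun U:ℝ => 1 - U + Real.log U) (𝓝[<] (1:ℝ)) (𝓝 0) := by
    have hc : ContinuousAt (fun U:ℝ => 1 - U + Real.log U) 1 :=
      ((continuousAt_const.sub continuousAt_id).add
        (Real.continuousAt_log one_ne_zero))
    have h2 : Tendsto (fun U:ℝ => 1 - U + Real.log U) (𝓝[<] (1:ℝ))
        (𝓝 (1 - 1 + Real.log 1)) := hc.tendsto.mono_left nhdsWithin_le_nhds
    simpa using h2
  have hterm1 : Tendsto (fun U:ℝ => φ U * ((1 - U) / U)) (𝓝[<] (1:ℝ)) (𝓝 0) := by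
    apply squeeze_zero_norm' (a := fun U => |C| * ((1 - U) / U))
    · filter_upwards [hC, hmem] with U hU hU'
      have h1 : (0:ℝ) ≤ (1 - U) / U := by
        apply div_nonneg <;> [linarith [hU'.2]; linarith [hU'.1]]
      rw [Real.norm_eq_abs, abs_mul, abs_of_nonneg h1]
      exact mul_le_mul (hU.trans (le_abs_self C)) le_rfl h1 (abs_nonneg C)
    · have hc : ContinuousAt (fun U:ℝ => |C| * ((1 - U) / U)) 1 :=
        continuousAt_const.mul
          ((continuousAt_const.sub continuousAt_id).div continuousAt_id one_ne_zero)
      have h2 : Tendsto (fun U:ℝ => |C| * ((1 - U) / U)) (𝓝[<] (1:ℝ))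
          (𝓝 (|C| * ((1 - 1) / 1))) := hc.tendsto.mono_left nhdsWithin_le_nhds
      simpa using h2
  have hgtend : Tendsto g (𝓝[<] (1:ℝ)) (𝓝 0) := by
    have heq : ∀ᶠ U in 𝓝[<] (1:ℝ),
        φ U * ((1 - U) / U) + (1 - U + Real.log U) = g U := by
      filter_upwards [hmem] with U hU
      have hUne : U ≠ 0 := ne_of_gt hU.1
      have hU1ne : U - 1 ≠ 0 := by intro h; nlinarith [hU.2]
      simp only [hg, hp]
      field_simp
      ring
    have := (hterm1.add hterm2)
    rw [add_zero] at this
    exact this.congr' heq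
  -- hence the constant is 0
  have hA : g (1/2) = 0 := by
    have hconst : Tendsto g (𝓝[<] (1:ℝ)) (𝓝 (g (1/2))) := by
      apply Tendsto.congr' _ tendsto_const_nhds
      filter_upwards [hmem] with U hU
      exact (hgc U hU).symm
    exact tendsto_nhds_unique hconst hgtend
  -- conclude
  intro U hU
  have h0 : g U = 0 := (hgc U hU).trans hA
  have hUne : U ≠ 0 := ne_of_gt hU.1
  have h1U : (1:ℝ) - U ≠ 0 := by intro h; nlinarith [hU.2]
  have hne : (1 - U) / U ≠ 0 := div_ne_zero h1U hUne
  have := mul_eq_zero.mp h0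
  rcases this with h | h
  · have : φ U = p U := by linarith [sub_eq_zero.mp h]
    simpa [hp] using this
  · exact absurd h hne
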